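/- Let X ⊆ ℝ^N be a convex set, g : ℝ^N → ℝ^M, and G : ℝ^N → Matrix (Fin M) (Fin N) ℝ such that for every y ∈ X, g has Jacobian G(y) within X at y (HasFDerivWithinAt with derivative the linear map v ↦ G(y)·v). Assume there are constants 0 < σ_min ≤ σ_max < ∞ and ω > 0 such that for all y, y' ∈ X: σ_min‖v‖ ≤ ‖G(y)·v‖ for all v, ‖G(y)‖ ≤ σ_max, and ‖G(y) − G(y')‖ ≤ ω‖y − y'‖ (operator norms). Let x⋆ ∈ X satisfy G(x⋆)ᵀ·g(x⋆) = 0 and set ε_min = ‖g(x⋆)‖. Let α ∈ (0,1], and for x ∈ X define the Gauss–Newton descent d(x) = (G(x)ᵀG(x))⁻¹·G(x)ᵀ·g(x). Then for every x ∈ X: ‖x − x⋆ − α·d(x)‖ ≤ T₁·‖x − x⋆‖² + T₂·‖x − x⋆‖, where T₁ = α·ω/(2σ_min) and T₂ = (1−α)·σ_max/σ_min + √2·α·ω·ε_min/σ_min². -/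

import Mathlib

open Matrix
open scoped RealInnerProductSpace InnerProductSpace Matrix.Norms.L2Operator

/-- Operator (spectral) 2-norm of a real matrix. -/
noncomputable def matOpNorm {m n : ℕ} (A : Matrix (Fin m) (Fin n) ℝ) : ℝ :=
  ‖LinearMap.toContinuousLinearMap (Matrix.toEuclideanLin A)‖

/-- Matrix-vector product as a map between Euclidean spaces. -/
noncomputable def matVec {m n : ℕ} (A : Matrix (Fin m) (Fin n) ℝ)
    (v : EuclideanSpace ℝ (Fin n)) : EuclideanSpace ℝ (Fin m) :=
  Matrix.toEuclideanLin A v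

lemma matVec_norm_le {m n : ℕ} (A : Matrix (Fin m) (Fin n) ℝ) (v : EuclideanSpace ℝ (Fin n)) :
    ‖matVec A v‖ ≤ matOpNorm A * ‖v‖ :=
  (LinearMap.toContinuousLinearMap (Matrix.toEuclideanLin A)).le_opNorm v

lemma matVec_add {m n : ℕ} (A : Matrix (Fin m) (Fin n) ℝ) (u v : EuclideanSpace ℝ (Fin n)) :
    matVec A (u + v) = matVec A u + matVec A v := map_add _ u v

lemma matVec_mul {m n k : ℕ} (A : Matrix (Fin m) (Fin n) ℝ) (B : Matrix (Fin n) (Fin k) ℝ)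
    (v : EuclideanSpace ℝ (Fin k)) : matVec (A * B) v = matVec A (matVec B v) := by
  apply (WithLp.equiv 2 (Fin m → ℝ)).injective
  simp [matVec, Matrix.ofLp_toEuclideanLin_apply, Matrix.toLin'_mul, Matrix.mulVec_mulVec]

lemma matVec_one {n : ℕ} (v : EuclideanSpace ℝ (Fin n)) : matVec (1 : Matrix (Fin n) (Fin n) ℝ) v = v := by
  apply (WithLp.equiv 2 (Fin n → ℝ)).injective
  simp [matVec, Matrix.ofLp_toEuclideanLin_apply]

lemma matOpNorm_transpose {m n : ℕ} (A : Matrix (Fin m) (Fin n) ℝ) :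
    matOpNorm Aᵀ = matOpNorm A := by
  rw [← Matrix.conjTranspose_eq_transpose_of_trivial]
  exact Matrix.l2_opNorm_conjTranspose A

lemma matVec_transpose_inner {m n : ℕ} (A : Matrix (Fin m) (Fin n) ℝ)
    (w : EuclideanSpace ℝ (Fin m)) (v : EuclideanSpace ℝ (Fin n)) :
    ⟪matVec Aᵀ w, v⟫_ℝ = ⟪w, matVec A v⟫_ℝ := by
  rw [show Aᵀ = Aᴴ from (Matrix.conjTranspose_eq_transpose_of_trivial A).symm]
  rw [matVec, Matrix.toEuclideanLin_conjTranspose_eq_adjoint]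
  exact LinearMap.adjoint_inner_left _ _ _

lemma matVec_matrix_sub {m n : ℕ} (A B : Matrix (Fin m) (Fin n) ℝ) (v : EuclideanSpace ℝ (Fin n)) :
    matVec (A - B) v = matVec A v - matVec B v := by
  simp [matVec, map_sub, LinearMap.sub_apply]

lemma matVec_eq_zero_iff {m n : ℕ} {A : Matrix (Fin m) (Fin n) ℝ} {σmin : ℝ} (hσ : 0 < σmin)
    (hlow : ∀ v : EuclideanSpace ℝ (Fin n), σmin * ‖v‖ ≤ ‖matVec A v‖)
    {v : EuclideanSpace ℝ (Fin n)} (h : matVec A v = 0) : v = 0 := by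
  have := hlow v
  rw [h, norm_zero] at this
  have : ‖v‖ ≤ 0 := nonpos_of_mul_nonpos_right ?_ hσ |>.trans (le_refl _)
  · exact norm_le_zero_iff.mp this
  · nlinarith [norm_nonneg v]

lemma isUnit_det_tmul {m n : ℕ} (A : Matrix (Fin m) (Fin n) ℝ) {σmin : ℝ} (hσ : 0 < σmin)
    (hlow : ∀ v : EuclideanSpace ℝ (Fin n), σmin * ‖v‖ ≤ ‖matVec A v‖) :
    IsUnit (Aᵀ * A).det := by
  rw [← Matrix.isUnit_iff_isUnit_det]
  rw [← Matrix.mulVec_injective_iff_isUnit]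
  have hker : ∀ x : Fin n → ℝ, (Aᵀ * A) *ᵥ x = 0 → x = 0 := by
    intro x hx
    have h1 : (A *ᵥ x) ⬝ᵥ (A *ᵥ x) = 0 := by
      have : x ⬝ᵥ ((Aᵀ * A) *ᵥ x) = 0 := by rw [hx, dotProduct_zero]
      rwa [← Matrix.mulVec_mulVec, Matrix.dotProduct_mulVec, Matrix.vecMul_transpose] at this
    have h2 : A *ᵥ x = 0 := dotProduct_self_eq_zero.mp h1
    have h3 : matVec A ((WithLp.equiv 2 (Fin n → ℝ)).symm x) = 0 := by
      rw [matVec, WithLp.equiv_symm_apply, Matrix.toEuclideanLin_apply_piLp_toLp, h2]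
      rfl
    have := matVec_eq_zero_iff hσ hlow h3
    simpa using congrArg (WithLp.equiv 2 (Fin n → ℝ)) this
  intro x y hxy
  have : (Aᵀ * A) *ᵥ (x - y) = 0 := by
    rw [Matrix.mulVec_sub, hxy, sub_self]
  have := hker _ this
  exact sub_eq_zero.mp this

section Pinv
variable {m n : ℕ} (A : Matrix (Fin m) (Fin n) ℝ) {σmin : ℝ}

lemma tmul_matVec_pinv (hdet : IsUnit (Aᵀ * A).det) (v : EuclideanSpace ℝ (Fin m)) :
    matVec (Aᵀ * A) (matVec ((Aᵀ * A)⁻¹ * Aᵀ) v) = matVec Aᵀ v := by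
  rw [← matVec_mul, Matrix.mul_nonsing_inv_cancel_left _ _ hdet]

lemma norm_A_pinv_le (hdet : IsUnit (Aᵀ * A).det) (v : EuclideanSpace ℝ (Fin m)) :
    ‖matVec A (matVec ((Aᵀ * A)⁻¹ * Aᵀ) v)‖ ≤ ‖v‖ := by
  set u := matVec ((Aᵀ * A)⁻¹ * Aᵀ) v with hu
  have key : ‖matVec A u‖ ^ 2 ≤ ‖v‖ * ‖matVec A u‖ := by
    have h1 : ‖matVec A u‖ ^ 2 = ⟪matVec Aᵀ (matVec A u), u⟫_ℝ := by
      rw [matVec_transpose_inner, real_inner_self_eq_norm_sq]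
    have h2 : matVec Aᵀ (matVec A u) = matVec Aᵀ v := by
      rw [← matVec_mul, tmul_matVec_pinv A hdet v]
    rw [h1, h2, matVec_transpose_inner]
    exact real_inner_le_norm _ _
  rcases le_or_gt ‖matVec A u‖ 0 with h | h
  · exact le_trans (le_trans h (norm_nonneg v)) (le_refl _)
  · nlinarith
end Pinv

lemma pinv_bound1 {m n : ℕ} {A : Matrix (Fin m) (Fin n) ℝ} {σmin : ℝ} (hσ : 0 < σmin)
    (hlow : ∀ v : EuclideanSpace ℝ (Fin n), σmin * ‖v‖ ≤ ‖matVec A v‖)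
    (hdet : IsUnit (Aᵀ * A).det) (v : EuclideanSpace ℝ (Fin m)) :
    ‖matVec ((Aᵀ * A)⁻¹ * Aᵀ) v‖ ≤ ‖v‖ / σmin := by
  rw [le_div_iff₀ hσ]
  calc ‖matVec ((Aᵀ * A)⁻¹ * Aᵀ) v‖ * σmin
      = σmin * ‖matVec ((Aᵀ * A)⁻¹ * Aᵀ) v‖ := by ring
    _ ≤ ‖matVec A (matVec ((Aᵀ * A)⁻¹ * Aᵀ) v)‖ := hlow _
    _ ≤ ‖v‖ := norm_A_pinv_le A hdet v

lemma pinv_bound2 {m n : ℕ} {A : Matrix (Fin m) (Fin n) ℝ} {σmin : ℝ} (hσ : 0 < σmin)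
    (hlow : ∀ v : EuclideanSpace ℝ (Fin n), σmin * ‖v‖ ≤ ‖matVec A v‖)
    (hdet : IsUnit (Aᵀ * A).det) (v : EuclideanSpace ℝ (Fin m)) :
    ‖matVec ((Aᵀ * A)⁻¹ * Aᵀ) v‖ ≤ ‖matVec Aᵀ v‖ / σmin ^ 2 := by
  set u := matVec ((Aᵀ * A)⁻¹ * Aᵀ) v with hu
  have h1 : ‖matVec A u‖ ^ 2 = ⟪matVec Aᵀ v, u⟫_ℝ := by
    rw [← real_inner_self_eq_norm_sq, ← matVec_transpose_inner, ← matVec_mul,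
      tmul_matVec_pinv A hdet v]
  have h2 : σmin ^ 2 * ‖u‖ ^ 2 ≤ ‖matVec Aᵀ v‖ * ‖u‖ := by
    have h3 := hlow u
    have h4 : ⟪matVec Aᵀ v, u⟫_ℝ ≤ ‖matVec Aᵀ v‖ * ‖u‖ := real_inner_le_norm _ _
    nlinarith [norm_nonneg u, norm_nonneg (matVec A u),
      mul_le_mul h3 h3 (by positivity) (norm_nonneg _)]
  rw [le_div_iff₀ (by positivity)]
  rcases le_or_gt ‖u‖ 0 with h | h
  · have : ‖u‖ = 0 := le_antisymm h (norm_nonneg _)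
    rw [this, zero_mul]
    exact norm_nonneg _
  · nlinarith

lemma taylor_quad {N M : ℕ} (X : Set (EuclideanSpace ℝ (Fin N))) (hX : Convex ℝ X)
    (g : EuclideanSpace ℝ (Fin N) → EuclideanSpace ℝ (Fin M))
    (G : EuclideanSpace ℝ (Fin N) → Matrix (Fin M) (Fin N) ℝ)
    (hderiv : ∀ y ∈ X, HasFDerivWithinAt g
      (LinearMap.toContinuousLinearMap (Matrix.toEuclideanLin (G y))) X y)
    (ω : ℝ) (hω : 0 ≤ ω)
    (hLip : ∀ y ∈ X, ∀ y' ∈ X, matOpNorm (G y - G y') ≤ ω * ‖y - y'‖)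
    (x : EuclideanSpace ℝ (Fin N)) (hx : x ∈ X)
    (xs : EuclideanSpace ℝ (Fin N)) (hxs : xs ∈ X) :
    ‖g x - g xs - matVec (G x) (x - xs)‖ ≤ ω / 2 * ‖x - xs‖ ^ 2 := by
  set e := x - xs with he
  set p : ℝ → EuclideanSpace ℝ (Fin N) := fun t => xs + t • e with hp
  have hp_mem : ∀ t ∈ Set.Icc (0:ℝ) 1, p t ∈ X := by
    intro t ht
    have h := hX hxs hx (a := 1 - t) (b := t) (by linarith [ht.2]) ht.1 (by ring)
    have : (1 - t) • xs + t • x = xs + t • e := by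
      rw [he]; module
    rwa [this] at h
  have hmaps : Set.MapsTo p (Set.Icc (0:ℝ) 1) X := fun t ht => hp_mem t ht
  have hpd : ∀ t : ℝ, HasDerivAt p e t := by
    intro t
    simpa [hp] using ((hasDerivAt_id t).smul_const e).const_add xs
  set c := matVec (G x) e with hc
  set f : ℝ → EuclideanSpace ℝ (Fin M) := fun t => g (p t) - g xs - t • c with hf
  have hf' : ∀ t ∈ Set.Icc (0:ℝ) 1,
      HasDerivWithinAt f (matVec (G (p t)) e - c) (Set.Icc (0:ℝ) 1) t := by
    intro t ht
    have h1 : HasDerivWithinAt (fun s => g (p s))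
        ((LinearMap.toContinuousLinearMap (Matrix.toEuclideanLin (G (p t)))) e)
        (Set.Icc (0:ℝ) 1) t :=
      (hderiv (p t) (hp_mem t ht)).comp_hasDerivWithinAt t ((hpd t).hasDerivWithinAt) hmaps
    have h2 : HasDerivWithinAt (fun s : ℝ => g (p s) - g xs)
        (matVec (G (p t)) e) (Set.Icc (0:ℝ) 1) t := h1.sub_const _
    have h3 : HasDerivWithinAt (fun s : ℝ => s • c) c (Set.Icc (0:ℝ) 1) t := by
      simpa using ((hasDerivAt_id t).smul_const c).hasDerivWithinAt (s := Set.Icc (0:ℝ) 1)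
    exact h2.sub h3
  set B : ℝ → ℝ := fun t => ω * ‖e‖ ^ 2 * (t - t ^ 2 / 2) with hB
  set B' : ℝ → ℝ := fun t => ω * ‖e‖ ^ 2 * (1 - t) with hB'
  have hBd : ∀ t : ℝ, HasDerivAt B (B' t) t := by
    intro t
    have : HasDerivAt (fun t : ℝ => t - t ^ 2 / 2) (1 - t) t := by
      have h1 := (hasDerivAt_id t).sub ((hasDerivAt_pow 2 t).div_const 2)
      refine h1.congr_deriv ?_
      norm_num
    simpa [hB, hB'] using this.const_mul (ω * ‖e‖ ^ 2)
  have bound : ∀ t ∈ Set.Ico (0:ℝ) 1, ‖matVec (G (p t)) e - c‖ ≤ B' t := by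
    intro t ht
    have h1 : matVec (G (p t)) e - c = matVec (G (p t) - G x) e := by
      rw [matVec_matrix_sub, hc]
    rw [h1]
    have h2 : ‖matVec (G (p t) - G x) e‖ ≤ matOpNorm (G (p t) - G x) * ‖e‖ :=
      matVec_norm_le _ _
    have h3 : matOpNorm (G (p t) - G x) ≤ ω * ‖p t - x‖ := hLip _ (hp_mem t (Set.Ico_subset_Icc_self ht)) _ hx
    have h4 : ‖p t - x‖ = (1 - t) * ‖e‖ := by
      have : p t - x = -((1 - t) • e) := by rw [hp, he]; module
      rw [this, norm_neg, norm_smul, Real.norm_eq_abs, abs_of_nonneg (by linarith [ht.2])]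
    have := h2.trans (mul_le_mul_of_nonneg_right h3 (norm_nonneg e))
    rw [h4] at this
    calc ‖matVec (G (p t) - G x) e‖ ≤ ω * ((1 - t) * ‖e‖) * ‖e‖ := this
      _ = ω * ‖e‖ ^ 2 * (1 - t) := by ring
  have key : ∀ t ∈ Set.Icc (0:ℝ) 1, ‖f t‖ ≤ B t := by
    apply image_norm_le_of_norm_deriv_right_le_deriv_boundary
      (f' := fun t => matVec (G (p t)) e - c)
    · exact fun t ht => (hf' t ht).continuousWithinAt
    · intro t ht
      exact (hf' t (Set.Ico_subset_Icc_self ht)).mono_of_mem_nhdsWithin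
        (Icc_mem_nhdsGE_of_mem ht)
    · show ‖f 0‖ ≤ B 0
      simp [hf, hB, hp]
    · exact hBd
    · exact bound
  have h1 := key 1 ⟨zero_le_one, le_refl 1⟩
  have hpx : p 1 = x := by
    simp only [hp, he]
    module
  have hf1 : f 1 = g x - g xs - c := by
    simp only [hf, hpx, one_smul]
  have hB1 : B 1 = ω / 2 * ‖e‖ ^ 2 := by simp only [hB]; ring
  rw [hf1, hB1] at h1
  exact h1

set_option maxHeartbeats 1000000 in
/-- the core error estimate for the undamped Gauss–Newton step
(before projection): ‖x − x⋆ − α d(x)‖ ≤ T₁‖x − x⋆‖² + T₂‖x − x⋆‖. -/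
theorem gauss_newton_step_error {N M : ℕ}
    (X : Set (EuclideanSpace ℝ (Fin N))) (hX : Convex ℝ X)
    (g : EuclideanSpace ℝ (Fin N) → EuclideanSpace ℝ (Fin M))
    (G : EuclideanSpace ℝ (Fin N) → Matrix (Fin M) (Fin N) ℝ)
    (hderiv : ∀ y ∈ X, HasFDerivWithinAt g
      (LinearMap.toContinuousLinearMap (Matrix.toEuclideanLin (G y))) X y)
    (σmin σmax ω : ℝ) (hσ0 : 0 < σmin) (hσσ : σmin ≤ σmax) (hω : 0 < ω)
    (hlow : ∀ y ∈ X, ∀ v : EuclideanSpace ℝ (Fin N),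
      σmin * ‖v‖ ≤ ‖matVec (G y) v‖)
    (hup : ∀ y ∈ X, matOpNorm (G y) ≤ σmax)
    (hLip : ∀ y ∈ X, ∀ y' ∈ X, matOpNorm (G y - G y') ≤ ω * ‖y - y'‖)
    (xstar : EuclideanSpace ℝ (Fin N)) (hxstar : xstar ∈ X)
    (hfix : matVec (G xstar)ᵀ (g xstar) = 0)
    (εmin : ℝ) (hεmin : εmin = ‖g xstar‖)
    (α : ℝ) (hα0 : 0 < α) (hα1 : α ≤ 1)
    (d : EuclideanSpace ℝ (Fin N) → EuclideanSpace ℝ (Fin N))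
    (hd : ∀ x, d x = matVec (((G x)ᵀ * G x)⁻¹ * (G x)ᵀ) (g x))
    (T₁ T₂ : ℝ)
    (hT₁ : T₁ = α * ω / (2 * σmin))
    (hT₂ : T₂ = (1 - α) * σmax / σmin + Real.sqrt 2 * α * ω * εmin / σmin ^ 2) :
    ∀ x ∈ X, ‖x - xstar - α • d x‖ ≤ T₁ * ‖x - xstar‖ ^ 2 + T₂ * ‖x - xstar‖ := by
  intro x hx
  set A := G x with hA
  set e := x - xstar with he
  set P := (Aᵀ * A)⁻¹ * Aᵀ with hP
  have hlowx : ∀ v : EuclideanSpace ℝ (Fin N), σmin * ‖v‖ ≤ ‖matVec A v‖ := hlow x hx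
  have hdet : IsUnit (Aᵀ * A).det := isUnit_det_tmul A hσ0 hlowx
  set r := g x - g xstar - matVec A e with hr
  have hrb : ‖r‖ ≤ ω / 2 * ‖e‖ ^ 2 :=
    taylor_quad X hX g G hderiv ω hω.le hLip x hx xstar hxstar
  have hgx : g x = r + matVec A e + g xstar := by rw [hr]; abel
  have hPAe : matVec P (matVec A e) = e := by
    rw [← matVec_mul, hP, Matrix.mul_assoc, Matrix.nonsing_inv_mul _ hdet, matVec_one]
  have hdx : d x = matVec P r + e + matVec P (g xstar) := by
    rw [hd x, ← hA, ← hP, hgx, matVec_add, matVec_add, hPAe]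
  set u₁ := matVec P r with hu₁
  set u₂ := matVec P (g xstar) with hu₂
  have hid : x - xstar - α • d x = (1 - α) • e - α • u₁ - α • u₂ := by
    rw [hdx, ← he]
    module
  have hnorm : ‖x - xstar - α • d x‖ ≤ (1 - α) * ‖e‖ + α * ‖u₁‖ + α * ‖u₂‖ := by
    rw [hid]
    calc ‖(1 - α) • e - α • u₁ - α • u₂‖
        ≤ ‖(1 - α) • e - α • u₁‖ + ‖α • u₂‖ := norm_sub_le _ _
      _ ≤ ‖(1 - α) • e‖ + ‖α • u₁‖ + ‖α • u₂‖ := by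
          have := norm_sub_le ((1 - α) • e) (α • u₁)
          linarith
      _ = (1 - α) * ‖e‖ + α * ‖u₁‖ + α * ‖u₂‖ := by
          rw [norm_smul, norm_smul, norm_smul, Real.norm_eq_abs, Real.norm_eq_abs,
            abs_of_nonneg (by linarith : (0:ℝ) ≤ 1 - α), abs_of_nonneg hα0.le]
  have hb1 : ‖u₁‖ ≤ (ω / 2 * ‖e‖ ^ 2) / σmin := by
    refine (pinv_bound1 hσ0 hlowx hdet r).trans ?_
    gcongr
  have hb2 : ‖u₂‖ ≤ ω * εmin * ‖e‖ / σmin ^ 2 := by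
    refine (pinv_bound2 hσ0 hlowx hdet (g xstar)).trans ?_
    gcongr ?_ / _
    have h1 : matVec Aᵀ (g xstar) = matVec (A - G xstar)ᵀ (g xstar) := by
      rw [Matrix.transpose_sub, matVec_matrix_sub, hfix, sub_zero]
    rw [h1]
    calc ‖matVec (A - G xstar)ᵀ (g xstar)‖
        ≤ matOpNorm (A - G xstar)ᵀ * ‖g xstar‖ := matVec_norm_le _ _
      _ = matOpNorm (A - G xstar) * εmin := by rw [matOpNorm_transpose, hεmin]
      _ ≤ ω * ‖e‖ * εmin := by
          apply mul_le_mul_of_nonneg_right _ (hεmin ▸ norm_nonneg _)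
          exact hLip x hx xstar hxstar
      _ = ω * εmin * ‖e‖ := by ring
  have hεnn : 0 ≤ εmin := hεmin ▸ norm_nonneg _
  have sqrt2 : (1:ℝ) ≤ Real.sqrt 2 := by
    rw [show (1:ℝ) = Real.sqrt 1 by simp]
    exact Real.sqrt_le_sqrt (by norm_num)
  have hEnn : (0:ℝ) ≤ ‖e‖ := norm_nonneg _
  calc ‖x - xstar - α • d x‖
      ≤ (1 - α) * ‖e‖ + α * ((ω / 2 * ‖e‖ ^ 2) / σmin) + α * (ω * εmin * ‖e‖ / σmin ^ 2) := by
        have := mul_le_mul_of_nonneg_left hb1 hα0.le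
        have := mul_le_mul_of_nonneg_left hb2 hα0.le
        linarith
    _ ≤ T₁ * ‖e‖ ^ 2 + T₂ * ‖e‖ := by
        rw [hT₁, hT₂]
        have h1 : α * ((ω / 2 * ‖e‖ ^ 2) / σmin) = α * ω / (2 * σmin) * ‖e‖ ^ 2 := by
          field_simp
        have h2 : (1 - α) * ‖e‖ ≤ (1 - α) * σmax / σmin * ‖e‖ := by
          apply mul_le_mul_of_nonneg_right _ hEnn
          rw [mul_div_assoc]
          exact le_mul_of_one_le_right (by linarith) ((one_le_div hσ0).2 hσσ)
        have h3 : α * (ω * εmin * ‖e‖ / σmin ^ 2) ≤ Real.sqrt 2 * α * ω * εmin / σmin ^ 2 * ‖e‖ := by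
          have heq1 : α * (ω * εmin * ‖e‖ / σmin ^ 2) = α * ω * εmin * ‖e‖ / σmin ^ 2 := by ring
          have heq2 : Real.sqrt 2 * α * ω * εmin / σmin ^ 2 * ‖e‖
              = Real.sqrt 2 * α * ω * εmin * ‖e‖ / σmin ^ 2 := by ring
          have h4 : 0 ≤ (Real.sqrt 2 - 1) * (α * ω * εmin * ‖e‖) / σmin ^ 2 :=
            div_nonneg (mul_nonneg (by linarith) (by positivity)) (by positivity)
          have h5 : Real.sqrt 2 * α * ω * εmin / σmin ^ 2 * ‖e‖
              - α * (ω * εmin * ‖e‖ / σmin ^ 2)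
              = (Real.sqrt 2 - 1) * (α * ω * εmin * ‖e‖) / σmin ^ 2 := by ring
          linarith [h4, h5]
        rw [add_mul]
        linarith [h1, h2, h3]
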